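/- arXiv:2005.02532 — 2 statements merged into one kernel-verified Lean document; each statement's English description precedes it below -/
import Mathlib

section
/- Suppose assumption A3 holds and assumption A4(q) holds at θ₀ for some constant q > 1, with derivative element Y^{θ₀}. Suppose further that there exist an integrable ℝ^p-valued random variable G, a constant K > 0, and a function u ↦ r_u with r_u = o(|u|) as |u| → 0, such that for each u ∈ ℝ^p with θ₀ + u ∈ Θ, |E[h(X^{θ₀+u}, θ₀) − h(X^{θ₀}, θ₀) − u^⊤ G]| ≤ K (‖X^{θ₀+u} − X^{θ₀} − u^⊤ Y^{θ₀}‖_{L^q} + r_u). Then γ_{n*}^{-1}(E[h(X^{θ}, θ₀)] − E[h(X^{θ₀}, θ₀)])|_{θ=θ̂_n} − E[G]^⊤ γ_{n*}^{-1}(θ̂_n − θ₀) → 0 in probability as n → ∞. -/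
open MeasureTheory Filter Topology Asymptotics

noncomputable def cutoff {E : Type*} [NormedAddCommGroup E] (M : ℝ) :
    BoundedContinuousFunction E ℝ :=
  BoundedContinuousFunction.ofNormedAddCommGroup
    (fun x => max 0 (min 1 (‖x‖ - M)))
    (continuous_const.max (continuous_const.min (continuous_norm.sub continuous_const)))
    1
    (fun x => by
      rw [Real.norm_eq_abs, abs_of_nonneg (le_max_left _ _)]
      exact max_le zero_le_one (min_le_left _ _))

lemma cutoff_apply {E : Type*} [NormedAddCommGroup E] (M : ℝ) (x : E) :
    cutoff M x = max 0 (min 1 (‖x‖ - M)) := rfl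

lemma cutoff_nonneg {E : Type*} [NormedAddCommGroup E] (M : ℝ) (x : E) : 0 ≤ cutoff M x :=
  le_max_left _ _

lemma cutoff_le_one {E : Type*} [NormedAddCommGroup E] (M : ℝ) (x : E) : cutoff M x ≤ 1 := by
  rw [cutoff_apply]; exact max_le zero_le_one (min_le_left _ _)

lemma cutoff_eq_zero {E : Type*} [NormedAddCommGroup E] {M : ℝ} {x : E} (hx : ‖x‖ ≤ M) :
    cutoff M x = 0 := by
  rw [cutoff_apply]
  exact max_eq_left (le_trans (min_le_right _ _) (by linarith))

lemma cutoff_eq_one {E : Type*} [NormedAddCommGroup E] {M : ℝ} {x : E} (hx : M + 1 ≤ ‖x‖) :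
    cutoff M x = 1 := by
  rw [cutoff_apply, min_eq_left (by linarith), max_eq_right zero_le_one]

lemma markov_cutoff {Ω : Type*} [MeasurableSpace Ω] (ℙ : Measure Ω) [IsProbabilityMeasure ℙ]
    {E : Type*} [NormedAddCommGroup E] [MeasurableSpace E] [OpensMeasurableSpace E]
    (M : ℝ) {f : Ω → E} (hf : Measurable f) :
    (ℙ {ω | M + 1 ≤ ‖f ω‖}).toReal ≤ ∫ ω, cutoff M (f ω) ∂ℙ := by
  have hs : MeasurableSet {ω | M + 1 ≤ ‖f ω‖} :=
    measurableSet_le measurable_const hf.norm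
  have hint : Integrable (fun ω => cutoff M (f ω)) ℙ := by
    refine Integrable.mono' (integrable_const 1)
      (((cutoff M).continuous.measurable.comp hf).aestronglyMeasurable)
      (ae_of_all _ fun ω => ?_)
    rw [Real.norm_eq_abs, abs_of_nonneg (cutoff_nonneg _ _)]
    exact cutoff_le_one _ _
  rw [← measureReal_def, ← integral_indicator_one hs]
  refine integral_mono ((integrable_const (1:ℝ)).indicator hs) hint fun ω => ?_
  by_cases hω : ω ∈ {ω | M + 1 ≤ ‖f ω‖}
  · rw [Set.indicator_of_mem hω, cutoff_eq_one hω]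
    exact le_refl 1
  · rw [Set.indicator_of_notMem hω]
    exact cutoff_nonneg _ _

/-- **Theorem 2.2.** Under (A3) and A4(q) with `q > 1`, if there exist an integrable
`ℝ^p`-valued random variable `G`, a constant `K > 0` and a remainder `r_u = o(|u|)` with
`|E[h(X^{θ₀+u},θ₀) − h(X^{θ₀},θ₀) − uᵀG]| ≤ K (‖X^{θ₀+u} − X^{θ₀} − uᵀY^{θ₀}‖_{L^q} + r_u)`,
then the linearization (2.2) holds with `C = E[G]`, i.e.
`γ_{n*}⁻¹ (E[h(X^θ,θ₀)] − E[h(X^{θ₀},θ₀)])|_{θ=θ̂_n} − E[G]ᵀ γ_{n*}⁻¹ (θ̂_n − θ₀) →p 0`. -/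
theorem stmt_2
    {Ω : Type*} [MeasurableSpace Ω] (ℙ : Measure Ω) [IsProbabilityMeasure ℙ]
    {𝒳 : Type*} [NormedAddCommGroup 𝒳] [NormedSpace ℝ 𝒳]
    {p : ℕ} (Θ : Set (Fin p → ℝ)) (θ₀ : Fin p → ℝ)
    (hθ₀ : θ₀ ∈ interior Θ)
    (X : (Fin p → ℝ) → Ω → 𝒳)
    (h : 𝒳 → (Fin p → ℝ) → ℝ)
    (hInt : ∀ θ ∈ Θ, ∀ θ' ∈ Θ, Integrable (fun ω => h (X θ ω) θ') ℙ)
    -- (A3)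
    (γ : ℕ → Fin p → ℝ) (hγpos : ∀ n k, 0 < γ n k)
    (γstar : ℕ → ℝ)
    (hγstar : ∀ n, (∀ k, γ n k ≤ γstar n) ∧ ∃ k, γstar n = γ n k)
    (hγ0 : Tendsto γstar atTop (𝓝 0))
    (θhat : ℕ → Ω → (Fin p → ℝ)) (hθhatmeas : ∀ n, Measurable (θhat n))
    (hθhatΘ : ∀ n ω, θhat n ω ∈ Θ)
    (Z Zstar : Ω → (Fin p → ℝ))
    (hZ : ∀ g : BoundedContinuousFunction (Fin p → ℝ) ℝ,
      Tendsto (fun n => ∫ ω, g (fun k => (γ n k)⁻¹ * (θhat n ω k - θ₀ k)) ∂ℙ)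
        atTop (𝓝 (∫ ω, g (Z ω) ∂ℙ)))
    (hZstar : ∀ g : BoundedContinuousFunction (Fin p → ℝ) ℝ,
      Tendsto (fun n => ∫ ω, g (fun k => (γstar n)⁻¹ * (θhat n ω k - θ₀ k)) ∂ℙ)
        atTop (𝓝 (∫ ω, g (Zstar ω) ∂ℙ)))
    -- A4(q) at θ₀ with derivative element Y^{θ₀}
    (q : ℝ) (hq : 1 < q)
    (Y : Ω → Fin p → 𝒳)
    (hYLq : MemLp Y (ENNReal.ofReal q) ℙ)
    (hA4 : (fun u : Fin p → ℝ =>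
        (∫ ω, ‖X (θ₀ + u) ω - X θ₀ ω - ∑ i, u i • Y ω i‖ ^ q ∂ℙ) ^ (1 / q))
      =o[𝓝 0] fun u => ‖u‖)
    -- the random variable G, the constant K, and the remainder r
    (G : Ω → Fin p → ℝ) (hGInt : Integrable G ℙ)
    (K : ℝ) (hK : 0 < K)
    (r : (Fin p → ℝ) → ℝ) (hr : r =o[𝓝 0] fun u => ‖u‖)
    (hbound : ∀ u : Fin p → ℝ, θ₀ + u ∈ Θ →
      |∫ ω, (h (X (θ₀ + u) ω) θ₀ - h (X θ₀ ω) θ₀ - ∑ i, u i * G ω i) ∂ℙ| ≤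
        K * ((∫ ω, ‖X (θ₀ + u) ω - X θ₀ ω - ∑ i, u i • Y ω i‖ ^ q ∂ℙ) ^ (1 / q) + r u)) :
    -- conclusion: convergence in probability to 0
    ∀ ε > 0, Tendsto (fun n => ℙ {ω |
        ε < |(γstar n)⁻¹ *
              ((∫ ω', h (X (θhat n ω) ω') θ₀ ∂ℙ) - ∫ ω', h (X θ₀ ω') θ₀ ∂ℙ)
            - ∑ i, (∫ ω', G ω' i ∂ℙ) * ((γstar n)⁻¹ * (θhat n ω i - θ₀ i))|})
      atTop (𝓝 0) := by
  intro ε hε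
  have hapos : ∀ n, 0 < γstar n := fun n => by
    obtain ⟨k, hk⟩ := (hγstar n).2; rw [hk]; exact hγpos n k
  have hθ₀Θ : θ₀ ∈ Θ := interior_subset hθ₀
  have hGi : ∀ i, Integrable (fun ω => G ω i) ℙ := fun i =>
    (ContinuousLinearMap.proj (R := ℝ) (φ := fun _ : Fin p => ℝ) i).integrable_comp hGInt
  set φ : (Fin p → ℝ) → ℝ := fun u =>
    ∫ ω, (h (X (θ₀ + u) ω) θ₀ - h (X θ₀ ω) θ₀ - ∑ i, u i * G ω i) ∂ℙ with hφdef
  have hφeq : ∀ u, θ₀ + u ∈ Θ → φ u =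
      (∫ ω, h (X (θ₀ + u) ω) θ₀ ∂ℙ) - (∫ ω, h (X θ₀ ω) θ₀ ∂ℙ)
        - ∑ i, u i * ∫ ω, G ω i ∂ℙ := by
    intro u hu
    have h1 := hInt _ hu _ hθ₀Θ
    have h2 := hInt _ hθ₀Θ _ hθ₀Θ
    have h3i : ∀ i ∈ Finset.univ, Integrable (fun ω => u i * G ω i) ℙ :=
      fun i _ => (hGi i).const_mul (u i)
    have h3 : Integrable (fun ω => ∑ i, u i * G ω i) ℙ := integrable_finset_sum _ h3i
    have h12 : Integrable (fun ω => h (X (θ₀ + u) ω) θ₀ - h (X θ₀ ω) θ₀) ℙ := h1.sub h2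
    show (∫ ω, (h (X (θ₀ + u) ω) θ₀ - h (X θ₀ ω) θ₀ - ∑ i, u i * G ω i) ∂ℙ) = _
    rw [integral_sub h12 h3, integral_sub h1 h2, integral_finset_sum _ h3i]
    congr 1
    exact Finset.sum_congr rfl fun i _ => integral_const_mul _ _
  have key : ∀ n (ω : Ω),
      (γstar n)⁻¹ * ((∫ ω', h (X (θhat n ω) ω') θ₀ ∂ℙ) - ∫ ω', h (X θ₀ ω') θ₀ ∂ℙ)
          - ∑ i, (∫ ω', G ω' i ∂ℙ) * ((γstar n)⁻¹ * (θhat n ω i - θ₀ i))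
        = (γstar n)⁻¹ * φ (θhat n ω - θ₀) := by
    intro n ω
    have hadd : θ₀ + (θhat n ω - θ₀) = θhat n ω := by abel
    rw [hφeq _ (by rw [hadd]; exact hθhatΘ n ω), hadd]
    simp only [Pi.sub_apply, mul_sub, Finset.mul_sum]
    congr 1
    exact Finset.sum_congr rfl fun i _ => by ring
  have hψ : (fun u : Fin p → ℝ => K *
      ((∫ ω, ‖X (θ₀ + u) ω - X θ₀ ω - ∑ i, u i • Y ω i‖ ^ q ∂ℙ) ^ (1 / q) + r u))
      =o[𝓝 0] fun u => ‖u‖ := (hA4.add hr).const_mul_left K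
  rw [ENNReal.tendsto_nhds_zero]
  intro δ hδ
  set δ₀ : ℝ := (min δ 1).toReal with hδ₀def
  have hmin_ne_top : min δ 1 ≠ ⊤ := ((min_le_right δ 1).trans_lt ENNReal.one_lt_top).ne
  have hδ₀pos : 0 < δ₀ := ENNReal.toReal_pos (lt_min hδ zero_lt_one).ne' hmin_ne_top
  have hofReal : ENNReal.ofReal δ₀ ≤ δ := by
    rw [hδ₀def, ENNReal.ofReal_toReal hmin_ne_top]; exact min_le_left _ _
  -- tightness of Zstar: choose M
  obtain ⟨M, hM⟩ : ∃ M : ℕ, ∫ ω, cutoff (M:ℝ) (Zstar ω) ∂ℙ < δ₀ / 2 := by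
    by_cases hms : ∀ M : ℕ, AEStronglyMeasurable (fun ω => cutoff (M:ℝ) (Zstar ω)) ℙ
    · have hDCT : Tendsto (fun M : ℕ => ∫ ω, cutoff (M:ℝ) (Zstar ω) ∂ℙ)
          atTop (𝓝 (∫ _ω, (0:ℝ) ∂ℙ)) := by
        refine MeasureTheory.tendsto_integral_of_dominated_convergence
          (fun _ => (1:ℝ)) hms (integrable_const 1)
          (fun M => ae_of_all _ fun ω => ?_) (ae_of_all _ fun ω => ?_)
        · rw [Real.norm_eq_abs, abs_of_nonneg (cutoff_nonneg _ _)]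
          exact cutoff_le_one _ _
        · have hev : ∀ᶠ (M : ℕ) in atTop, cutoff (M:ℝ) (Zstar ω) = 0 := by
            filter_upwards [eventually_ge_atTop ⌈‖Zstar ω‖⌉₊] with M hMge
            exact cutoff_eq_zero (le_trans (Nat.le_ceil _) (by exact_mod_cast hMge))
          exact Tendsto.congr' (hev.mono fun M hMe => hMe.symm) tendsto_const_nhds
      rw [integral_zero] at hDCT
      exact (hDCT.eventually_lt_const (by positivity)).exists
    · push_neg at hms
      obtain ⟨M, hMm⟩ := hms
      exact ⟨M, by rw [integral_undef (fun hI => hMm hI.1)]; positivity⟩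
  set c : ℝ := ε / ((M:ℝ) + 1) with hcdef
  have hMpos : (0:ℝ) < (M:ℝ) + 1 := by positivity
  have hc : 0 < c := div_pos hε hMpos
  obtain ⟨η, hη, hball⟩ := Metric.eventually_nhds_iff.mp (hψ.def hc)
  have hξmeas : ∀ n, Measurable (fun ω => (fun k => (γstar n)⁻¹ * (θhat n ω k - θ₀ k))) :=
    fun n => measurable_pi_lambda _ fun k =>
      measurable_const.mul (((measurable_pi_apply k).comp (hθhatmeas n)).sub measurable_const)
  have hξnorm : ∀ n ω, ‖(fun k => (γstar n)⁻¹ * (θhat n ω k - θ₀ k))‖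
      = (γstar n)⁻¹ * ‖θhat n ω - θ₀‖ := by
    intro n ω
    have heq : (fun k => (γstar n)⁻¹ * (θhat n ω k - θ₀ k))
        = (γstar n)⁻¹ • (θhat n ω - θ₀) := by
      funext k; simp [smul_eq_mul]
    rw [heq, norm_smul, Real.norm_eq_abs, abs_of_pos (inv_pos.mpr (hapos n))]
  have hE1 : ∀ᶠ n in atTop,
      ∫ ω, cutoff (M:ℝ) (fun k => (γstar n)⁻¹ * (θhat n ω k - θ₀ k)) ∂ℙ < δ₀ :=
    (hZstar (cutoff (M:ℝ))).eventually_lt_const (hM.trans (by linarith))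
  have hE2 : ∀ᶠ n in atTop, γstar n * ((M:ℝ) + 1) < η := by
    have h2 : Tendsto (fun n => γstar n * ((M:ℝ) + 1)) atTop (𝓝 0) := by
      simpa using hγ0.mul_const ((M:ℝ) + 1)
    exact h2.eventually_lt_const hη
  filter_upwards [hE1, hE2] with n hn1 hn2
  have hsub : {ω | ε < |(γstar n)⁻¹ *
              ((∫ ω', h (X (θhat n ω) ω') θ₀ ∂ℙ) - ∫ ω', h (X θ₀ ω') θ₀ ∂ℙ)
            - ∑ i, (∫ ω', G ω' i ∂ℙ) * ((γstar n)⁻¹ * (θhat n ω i - θ₀ i))|}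
      ⊆ {ω | (M:ℝ) + 1 ≤ ‖(fun k => (γstar n)⁻¹ * (θhat n ω k - θ₀ k))‖} := by
    intro ω hω
    rw [Set.mem_setOf_eq] at hω
    rw [Set.mem_setOf_eq]
    by_contra hcon
    push_neg at hcon
    rw [key n ω] at hω
    set u : Fin p → ℝ := θhat n ω - θ₀ with hu
    have h6 : (γstar n)⁻¹ * ‖u‖ < (M:ℝ) + 1 := by rw [← hξnorm n ω]; exact hcon
    have h5 : ‖u‖ < γstar n * ((M:ℝ) + 1) := by
      calc ‖u‖ = γstar n * ((γstar n)⁻¹ * ‖u‖) :=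
            (mul_inv_cancel_left₀ (hapos n).ne' _).symm
        _ < γstar n * ((M:ℝ) + 1) := by
            exact mul_lt_mul_of_pos_left h6 (hapos n)
    have h7 : ‖u‖ < η := h5.trans hn2
    have hmem : θ₀ + u ∈ Θ := by
      rw [hu, show θ₀ + (θhat n ω - θ₀) = θhat n ω from by abel]
      exact hθhatΘ n ω
    have h9 := hball (y := u) (by rw [dist_zero_right]; exact h7)
    rw [norm_norm, Real.norm_eq_abs] at h9
    have h8 : |φ u| ≤ c * ‖u‖ :=
      le_trans (hbound u hmem) (le_trans (le_abs_self _) h9)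
    have h10 : (γstar n)⁻¹ * |φ u| ≤ ε := by
      calc (γstar n)⁻¹ * |φ u| ≤ (γstar n)⁻¹ * (c * ‖u‖) :=
            mul_le_mul_of_nonneg_left h8 (inv_nonneg.mpr (hapos n).le)
        _ = c * ((γstar n)⁻¹ * ‖u‖) := by ring
        _ ≤ c * ((M:ℝ) + 1) := mul_le_mul_of_nonneg_left h6.le hc.le
        _ = ε := by rw [hcdef]; exact div_mul_cancel₀ ε hMpos.ne'
    rw [abs_mul, abs_of_pos (inv_pos.mpr (hapos n))] at hω
    exact absurd hω (not_lt.mpr h10)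
  calc ℙ _ ≤ ℙ {ω | (M:ℝ) + 1 ≤ ‖(fun k => (γstar n)⁻¹ * (θhat n ω k - θ₀ k))‖} :=
        measure_mono hsub
    _ ≤ ENNReal.ofReal δ₀ := by
        refine (ENNReal.le_ofReal_iff_toReal_le (measure_ne_top _ _) hδ₀pos.le).mpr ?_
        exact (markov_cutoff ℙ (M:ℝ) (hξmeas n)).trans hn1.le
    _ ≤ δ := hofReal
end

section
/- Let T > 0, let U : ℝ → ℝ be twice differentiable with |U'(z)| ≤ M and |U''(z)| ≤ M for all z ∈ ℝ, let w, x : [0,T] → ℝ and y : [0,T] → ℝ^p be continuous, and let u ∈ ℝ^p. Then |∫₀^T (U(w_t) − U(x_t) − u^⊤ U'(x_t) y_t) dt| ≤ M T (‖w − x − u^⊤ y‖ + ‖w − x − u^⊤ y‖² + |u|² ‖y‖²), where ‖f‖ := sup_{t∈[0,T]} |f_t| denotes the sup norm of a path (for y, ‖y‖ := sup_{t∈[0,T]} |y_t| with |·| the Euclidean norm on ℝ^p, and (u^⊤ y)_t := u^⊤ y_t). In particular, the map x ↦ ∫₀^T U(x_t) dt admits ∫₀^T U'(x_t) y_t dt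 as its first-order approximation coefficient in the direction of the derivative path y. -/
open Filter Topology

lemma taylor_one_sided (U U' U'' : ℝ → ℝ) (M : ℝ)
    (hU' : ∀ z, HasDerivAt U (U' z) z)
    (hU'' : ∀ z, HasDerivAt U' (U'' z) z)
    (hM2 : ∀ z, |U'' z| ≤ M) (a b : ℝ) :
    U b - U a - U' a * (b - a) ≤ M / 2 * (b - a) ^ 2 := by
  have lip : ∀ t, |U' t - U' a| ≤ M * |t - a| := by
    intro t
    have := Convex.norm_image_sub_le_of_norm_hasDerivWithin_le
      (f := U') (f' := U'') (C := M) (s := Set.univ)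
      (fun z _ => (hU'' z).hasDerivWithinAt)
      (fun z _ => by simpa [Real.norm_eq_abs] using hM2 z)
      convex_univ (Set.mem_univ a) (Set.mem_univ t)
    simpa [Real.norm_eq_abs] using this
  set g : ℝ → ℝ := fun t => U t - U a - U' a * (t - a) - M / 2 * (t - a) ^ 2 with hgdef
  have hg : ∀ t, HasDerivAt g (U' t - U' a - M * (t - a)) t := by
    intro t
    have h1 : HasDerivAt (fun t : ℝ => t - a) 1 t := (hasDerivAt_id t).sub_const a
    have h2 : HasDerivAt (fun t : ℝ => (t - a) ^ 2) (2 * (t - a)) t := by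
      simpa using h1.fun_pow 2
    have := (((hU' t).sub_const (U a)).sub (h1.const_mul (U' a))).sub
      (h2.const_mul (M / 2))
    exact this.congr_deriv (by ring)
  have hga : g a = 0 := by simp [hgdef]
  have key : g b ≤ g a := by
    rcases le_total a b with hab | hab
    · have : AntitoneOn g (Set.Ici a) := by
        apply antitoneOn_of_deriv_nonpos (convex_Ici a)
          (fun t _ => (hg t).continuousAt.continuousWithinAt)
          (fun t _ => (hg t).differentiableAt.differentiableWithinAt)
        intro t ht
        rw [(hg t).deriv]
        have ht' : a ≤ t := le_of_lt (by simpa using ht)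
        have h := lip t
        rw [abs_of_nonneg (by linarith : (0:ℝ) ≤ t - a)] at h
        have h2 := (abs_le.mp h).2
        linarith
      exact this (Set.self_mem_Ici) (by exact hab) hab
    · have : MonotoneOn g (Set.Iic a) := by
        apply monotoneOn_of_deriv_nonneg (convex_Iic a)
          (fun t _ => (hg t).continuousAt.continuousWithinAt)
          (fun t _ => (hg t).differentiableAt.differentiableWithinAt)
        intro t ht
        rw [(hg t).deriv]
        have ht' : t ≤ a := le_of_lt (by simpa using ht)
        have h := abs_le.mp (lip t)
        rw [abs_of_nonpos (by linarith : t - a ≤ 0)] at h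
        linarith [h.1]
      exact this (by exact hab) Set.self_mem_Iic hab
  have : g b ≤ 0 := by rw [hga] at key; exact key
  simpa [hgdef] using this

lemma taylor_abs (U U' U'' : ℝ → ℝ) (M : ℝ)
    (hU' : ∀ z, HasDerivAt U (U' z) z)
    (hU'' : ∀ z, HasDerivAt U' (U'' z) z)
    (hM2 : ∀ z, |U'' z| ≤ M) (a b : ℝ) :
    |U b - U a - U' a * (b - a)| ≤ M / 2 * (b - a) ^ 2 := by
  rw [abs_le]
  constructor
  · have := taylor_one_sided (fun z => -U z) (fun z => -U' z) (fun z => -U'' z) M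
      (fun z => (hU' z).neg) (fun z => (hU'' z).neg)
      (fun z => by simpa [abs_neg] using hM2 z) a b
    linarith
  · exact taylor_one_sided U U' U'' M hU' hU'' hM2 a b

/-- **Deterministic pathwise inequality (Remark 3.1).** For `U` twice differentiable
with `|U'| ≤ M` and `|U''| ≤ M`, continuous paths `w, x : [0,T] → ℝ`,
`y : [0,T] → ℝ^p`, and `u ∈ ℝ^p`,
`|∫₀^T (U(w_t) − U(x_t) − uᵀ U'(x_t) y_t) dt|
  ≤ M T (‖w − x − uᵀy‖ + ‖w − x − uᵀy‖² + |u|² ‖y‖²)`,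
where `‖·‖` is the sup norm over `[0,T]` and `|·|` the Euclidean norm on `ℝ^p`. -/
theorem stmt_6 {p : ℕ} (T : ℝ) (hT : 0 < T)
    (U U' U'' : ℝ → ℝ) (M : ℝ)
    (hU' : ∀ z, HasDerivAt U (U' z) z)
    (hU'' : ∀ z, HasDerivAt U' (U'' z) z)
    (hM1 : ∀ z, |U' z| ≤ M) (hM2 : ∀ z, |U'' z| ≤ M)
    (w x : ℝ → ℝ) (y : ℝ → EuclideanSpace ℝ (Fin p))
    (hw : ContinuousOn w (Set.Icc 0 T)) (hx : ContinuousOn x (Set.Icc 0 T))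
    (hy : ContinuousOn y (Set.Icc 0 T))
    (u : EuclideanSpace ℝ (Fin p)) :
    |∫ t in (0:ℝ)..T, (U (w t) - U (x t) - ∑ i, u i * (U' (x t) * y t i))| ≤
      M * T * ((⨆ t : Set.Icc (0:ℝ) T, |w t - x t - ∑ i, u i * y t i|)
        + (⨆ t : Set.Icc (0:ℝ) T, |w t - x t - ∑ i, u i * y t i|) ^ 2
        + ‖u‖ ^ 2 * (⨆ t : Set.Icc (0:ℝ) T, ‖y t‖) ^ 2) := by
  have hM : 0 ≤ M := le_trans (abs_nonneg _) (hM1 0)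
  set r : ℝ → ℝ := fun t => w t - x t - ∑ i, u i * y t i with hrdef
  set R : ℝ := ⨆ t : Set.Icc (0:ℝ) T, |r t| with hRdef
  set Y : ℝ := ⨆ t : Set.Icc (0:ℝ) T, ‖y t‖ with hYdef
  -- continuity of r
  have hs : ContinuousOn (fun t => ∑ i, u i * y t i) (Set.Icc 0 T) := by
    apply continuousOn_finset_sum
    intro i _
    exact continuousOn_const.mul ((EuclideanSpace.proj i).continuous.comp_continuousOn hy)
  have hr : ContinuousOn r (Set.Icc 0 T) := ((hw.sub hx).sub hs)
  -- boundedness for ciSup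
  have hne : (Set.Icc (0:ℝ) T).Nonempty := ⟨0, by constructor <;> [rfl; exact hT.le]⟩
  have hbR : BddAbove (Set.range fun t : Set.Icc (0:ℝ) T => |r t|) := by
    have h := (isCompact_Icc.image_of_continuousOn hr.abs).bddAbove
    rw [Set.image_eq_range] at h
    exact h
  have hbY : BddAbove (Set.range fun t : Set.Icc (0:ℝ) T => ‖y t‖) := by
    have h := (isCompact_Icc.image_of_continuousOn hy.norm).bddAbove
    rw [Set.image_eq_range] at h
    exact h
  have hrR : ∀ t : Set.Icc (0:ℝ) T, |r t| ≤ R := fun t => le_ciSup hbR t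
  have hyY : ∀ t : Set.Icc (0:ℝ) T, ‖y t‖ ≤ Y := fun t => le_ciSup hbY t
  have hR0 : 0 ≤ R := le_trans (abs_nonneg _) (hrR ⟨0, ⟨le_refl 0, hT.le⟩⟩)
  have hY0 : 0 ≤ Y := le_trans (norm_nonneg _) (hyY ⟨0, ⟨le_refl 0, hT.le⟩⟩)
  -- Cauchy--Schwarz
  have hCS : ∀ t, |∑ i, u i * y t i| ≤ ‖u‖ * ‖y t‖ := by
    intro t
    have : (∑ i, u i * y t i) = inner ℝ u (y t) := by
      rw [PiLp.inner_apply]; simp [RCLike.inner_apply, mul_comm]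
    rw [this]
    exact abs_real_inner_le_norm u (y t)
  -- pointwise bound
  set C : ℝ := M * (R + R ^ 2 + ‖u‖ ^ 2 * Y ^ 2) with hCdef
  have hpt : ∀ t ∈ Set.uIoc (0:ℝ) T,
      ‖U (w t) - U (x t) - ∑ i, u i * (U' (x t) * y t i)‖ ≤ C := by
    intro t ht
    have htIcc : t ∈ Set.Icc (0:ℝ) T := by
      rw [Set.uIoc_of_le hT.le] at ht
      exact ⟨ht.1.le, ht.2⟩
    set s := ∑ i, u i * y t i with hsdef
    have hsum : (∑ i, u i * (U' (x t) * y t i)) = U' (x t) * s := by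
      rw [Finset.mul_sum]; apply Finset.sum_congr rfl; intro i _; ring
    have hdecomp : U (w t) - U (x t) - ∑ i, u i * (U' (x t) * y t i)
        = (U (w t) - U (x t) - U' (x t) * (w t - x t)) + U' (x t) * r t := by
      rw [hsum, hrdef]; ring
    rw [Real.norm_eq_abs, hdecomp]
    have h1 : |U (w t) - U (x t) - U' (x t) * (w t - x t)| ≤ M / 2 * (w t - x t) ^ 2 :=
      taylor_abs U U' U'' M hU' hU'' hM2 (x t) (w t)
    have h2 : |U' (x t) * r t| ≤ M * |r t| := by
      rw [abs_mul]
      exact mul_le_mul_of_nonneg_right (hM1 _) (abs_nonneg _)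
    have hwx : (w t - x t) ^ 2 ≤ 2 * (r t) ^ 2 + 2 * s ^ 2 := by
      have heq : w t - x t = r t + s := by rw [hrdef]; ring
      rw [heq]; nlinarith [sq_nonneg (r t - s)]
    have hs2 : s ^ 2 ≤ ‖u‖ ^ 2 * ‖y t‖ ^ 2 := by
      have := hCS t
      nlinarith [abs_nonneg s, norm_nonneg u, norm_nonneg (y t), sq_abs s]
    have hrt : |r t| ≤ R := hrR ⟨t, htIcc⟩
    have hrt2 : (r t) ^ 2 ≤ R ^ 2 := by
      rw [← sq_abs]; exact pow_le_pow_left₀ (abs_nonneg _) hrt 2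
    have hyt2 : ‖y t‖ ^ 2 ≤ Y ^ 2 := pow_le_pow_left₀ (norm_nonneg _) (hyY ⟨t, htIcc⟩) 2
    calc |(U (w t) - U (x t) - U' (x t) * (w t - x t)) + U' (x t) * r t|
        ≤ |U (w t) - U (x t) - U' (x t) * (w t - x t)| + |U' (x t) * r t| := abs_add_le _ _
      _ ≤ M / 2 * (w t - x t) ^ 2 + M * |r t| := add_le_add h1 h2
      _ ≤ C := by
          rw [hCdef]
          nlinarith [mul_le_mul_of_nonneg_left hyt2 (mul_nonneg hM (sq_nonneg ‖u‖)),
            mul_le_mul_of_nonneg_left hs2 hM, mul_le_mul_of_nonneg_left hrt2 hM,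
            mul_le_mul_of_nonneg_left hrt hM]
  have := intervalIntegral.norm_integral_le_of_norm_le_const hpt
  rw [Real.norm_eq_abs] at this
  calc |∫ t in (0:ℝ)..T, (U (w t) - U (x t) - ∑ i, u i * (U' (x t) * y t i))|
      ≤ C * |T - 0| := this
    _ = M * T * (R + R ^ 2 + ‖u‖ ^ 2 * Y ^ 2) := by
        rw [hCdef, abs_of_pos (by linarith : (0:ℝ) < T - 0)]; ring
end
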